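/- Let Λ and T be n×n unitary complex matrices and q a complex number with |q| = 1 such that TΛ = q·ΛT. Then [[Λ,Λ†],Λ] + [[Λ,T],T†] + [[Λ,T†],T] = 2|1−q|²·Λ and [[T,T†],T] + [[T,Λ],Λ†] + [[T,Λ†],Λ] = 2|1−q|²·T; that is, (Λ,T) satisfies the DMSA equations with spectrum {|1−q|²}. In particular this applies to the fuzzy torus matrices Λ = e^{iθ}g and T = e^{iθ′}h, where g is diagonal with g_{kk} = q^{k−1}, h is the cyclic shift matrix with h_{k,k+1} = 1 (1 ≤ k ≤ n−1), h_{n,1} = 1, and qⁿ = 1. -/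

import Mathlib

open scoped Matrix BigOperators

/-- The commutator `[A,B] = AB − BA` of square matrices. -/
noncomputable def matComm {n : ℕ} (A B : Matrix (Fin n) (Fin n) ℂ) : Matrix (Fin n) (Fin n) ℂ :=
  A * B - B * A

/-- The clock matrix `g` with `g_{kk} = q^{k-1}` (indices `k = 1, …, n`). -/
noncomputable def clock (n : ℕ) (q : ℂ) : Matrix (Fin n) (Fin n) ℂ :=
  Matrix.diagonal fun k => q ^ (k : ℕ)

/-- The cyclic shift matrix `h` with `h_{k,k+1} = 1` for `1 ≤ k ≤ n−1`, `h_{n,1} = 1`,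
and all other entries zero. -/
noncomputable def shift (n : ℕ) : Matrix (Fin n) (Fin n) ℂ :=
  Matrix.of fun k l => if (l : ℕ) = ((k : ℕ) + 1) % n then 1 else 0

lemma succ_mod_inj {n k l : ℕ} (hk : k < n) (hl : l < n) (h2 : (k+1)%n = (l+1)%n) : k = l := by
  rcases eq_or_lt_of_le (Nat.succ_le_of_lt hk) with h | h <;>
    rcases eq_or_lt_of_le (Nat.succ_le_of_lt hl) with h' | h'
  · omega
  · rw [Nat.mod_eq_of_lt h', ← h, Nat.mod_self] at h2; omega
  · rw [Nat.mod_eq_of_lt h, ← h', Nat.mod_self] at h2; omega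
  · rw [Nat.mod_eq_of_lt h, Nat.mod_eq_of_lt h'] at h2; omega

lemma pow_mod_eq {q : ℂ} {n : ℕ} (hq : q ^ n = 1) (a : ℕ) : q ^ (a % n) = q ^ a := by
  conv_rhs => rw [← Nat.div_add_mod a n, pow_add, pow_mul, hq, one_pow, one_mul]

lemma shift_mul_clock (n : ℕ) (q : ℂ) (hq : q ^ n = 1) :
    shift n * clock n q = q • (clock n q * shift n) := by
  ext k l
  simp only [shift, clock, Matrix.mul_diagonal, Matrix.diagonal_mul, Matrix.smul_apply,
    Matrix.of_apply, smul_eq_mul]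
  split
  · next h => rw [h, pow_mod_eq hq, pow_succ]; ring
  · simp

lemma clock_mem (n : ℕ) (hn : 0 < n) (q : ℂ) (hq : q ^ n = 1) :
    clock n q ∈ Matrix.unitaryGroup (Fin n) ℂ := by
  have habs : ‖q‖ = 1 := by
    have h : ‖q‖ ^ n = 1 ^ n := by rw [← norm_pow, hq, norm_one, one_pow]
    exact (pow_left_strictMonoOn₀ hn.ne').injOn.eq_iff (by simp [norm_nonneg])
      (by norm_num) |>.mp h
  rw [Matrix.mem_unitaryGroup_iff, Matrix.star_eq_conjTranspose]
  rw [clock, Matrix.diagonal_conjTranspose, Matrix.diagonal_mul_diagonal]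
  have : (fun i : Fin n => q ^ (i : ℕ) * star (fun k : Fin n => q ^ (k : ℕ)) i)
      = fun _ => (1 : ℂ) := by
    funext i
    simp only [Pi.star_apply]
    rw [show star (q ^ (i:ℕ)) = (starRingEnd ℂ) (q ^ (i:ℕ)) from rfl, Complex.mul_conj]
    norm_cast
    rw [Complex.normSq_eq_norm_sq, norm_pow, habs, one_pow, one_pow]
  rw [this, Matrix.diagonal_one]

lemma shift_mem (n : ℕ) (hn : 0 < n) : shift n ∈ Matrix.unitaryGroup (Fin n) ℂ := by
  rw [Matrix.mem_unitaryGroup_iff, Matrix.star_eq_conjTranspose]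
  ext k l
  simp only [Matrix.mul_apply, Matrix.conjTranspose_apply, shift, Matrix.of_apply,
    Matrix.one_apply]
  set j0 : Fin n := ⟨((k : ℕ) + 1) % n, Nat.mod_lt _ hn⟩ with hj0
  have hterm : ∀ j : Fin n,
      (if ((j:ℕ) = ((k:ℕ)+1) % n) then (1:ℂ) else 0) *
        star (if ((j:ℕ) = ((l:ℕ)+1) % n) then (1:ℂ) else 0) =
      if j = j0 then (if ((j0:ℕ) = ((l:ℕ)+1) % n) then (1:ℂ) else 0) else 0 := by
    intro j
    by_cases h : j = j0
    · subst h
      simp [apply_ite (star : ℂ → ℂ), hj0]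
    · rw [if_neg h, if_neg, zero_mul]
      intro hc
      exact h (Fin.ext (by simpa using hc))
  rw [Finset.sum_congr rfl (fun j _ => hterm j), Finset.sum_ite_eq' Finset.univ]
  simp only [Finset.mem_univ, if_true]
  have hk := k.isLt; have hl := l.isLt
  by_cases h : k = l
  · subst h; simp [hj0]
  · rw [if_neg, if_neg h]
    intro hc
    have h2 : ((k:ℕ)+1) % n = ((l:ℕ)+1) % n := by simpa using hc
    exact h (Fin.ext (succ_mod_inj hk hl h2))

lemma smul_mem_unitary {n : ℕ} {U : Matrix (Fin n) (Fin n) ℂ}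
    (hU : U ∈ Matrix.unitaryGroup (Fin n) ℂ) {c : ℂ} (hc : ‖c‖ = 1) :
    c • U ∈ Matrix.unitaryGroup (Fin n) ℂ := by
  rw [Matrix.mem_unitaryGroup_iff] at hU ⊢
  rw [star_smul, smul_mul_assoc, mul_smul_comm, smul_smul, hU]
  rw [Complex.star_def, Complex.mul_conj]
  norm_cast
  rw [Complex.normSq_eq_norm_sq, hc]
  norm_num

lemma exp_abs (θ : ℝ) : ‖Complex.exp (Complex.I * θ)‖ = 1 := by
  rw [Complex.norm_exp]
  simp [Complex.mul_re]

/-- One half of the DMSA system, under unitarity and the exchange relation. -/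
lemma dmsa_one {n : ℕ} (Λ T : Matrix (Fin n) (Fin n) ℂ)
    (h1 : Λ * Λᴴ = 1) (h2 : Λᴴ * Λ = 1) (h3 : T * Tᴴ = 1) (h4 : Tᴴ * T = 1)
    (q : ℂ) (hq : q * (starRingEnd ℂ) q = 1) (hcomm : T * Λ = q • (Λ * T)) :
    matComm (matComm Λ Λᴴ) Λ + matComm (matComm Λ T) Tᴴ + matComm (matComm Λ Tᴴ) T =
      ((1 - q) * (1 - (starRingEnd ℂ) q) + (1 - (starRingEnd ℂ) q) * (1 - q)) • Λ := by
  set c := (starRingEnd ℂ) q with hc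
  have hcq : c * q = 1 := by rw [mul_comm] at hq; exact hq
  have e1 : Λ * T = c • (T * Λ) := by
    rw [hcomm, smul_smul, hcq, one_smul]
  have e2 : Λ * Tᴴ = q • (Tᴴ * Λ) := by
    have step : Λ * Tᴴ = Tᴴ * ((T * Λ) * Tᴴ) := by
      rw [← mul_assoc, ← mul_assoc, h4, one_mul]
    rw [step, hcomm, smul_mul_assoc, mul_smul_comm, mul_assoc Λ T Tᴴ, h3, mul_one]
  have e2' : Tᴴ * Λ = c • (Λ * Tᴴ) := by
    rw [e2, smul_smul, hcq, one_smul]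
  have key0 : matComm (matComm Λ Λᴴ) Λ = 0 := by
    have : matComm Λ Λᴴ = 0 := by rw [matComm, h1, h2, sub_self]
    rw [this, matComm, zero_mul, mul_zero, sub_self]
  have hb1 : matComm Λ T = (1 - q) • (Λ * T) := by
    rw [matComm, hcomm, sub_smul, one_smul]
  have key1 : matComm (matComm Λ T) Tᴴ = ((1 - q) * (1 - c)) • Λ := by
    rw [matComm, hb1, smul_mul_assoc, mul_smul_comm, ← smul_sub]
    have hA : Λ * T * Tᴴ = Λ := by rw [mul_assoc, h3, mul_one]
    have hB : Tᴴ * (Λ * T) = c • Λ := by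
      rw [e1, mul_smul_comm, ← mul_assoc, h4, one_mul]
    rw [hA, hB, show Λ - c • Λ = (1 - c) • Λ by rw [sub_smul, one_smul], smul_smul]
  have hb2 : matComm Λ Tᴴ = (1 - c) • (Λ * Tᴴ) := by
    rw [matComm, e2', sub_smul, one_smul]
  have key2 : matComm (matComm Λ Tᴴ) T = ((1 - c) * (1 - q)) • Λ := by
    rw [matComm, hb2, smul_mul_assoc, mul_smul_comm, ← smul_sub]
    have hA : Λ * Tᴴ * T = Λ := by rw [mul_assoc, h4, mul_one]
    have hB : T * (Λ * Tᴴ) = q • Λ := by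
      rw [e2, mul_smul_comm, ← mul_assoc, h3, one_mul]
    rw [hA, hB, show Λ - q • Λ = (1 - q) • Λ by rw [sub_smul, one_smul], smul_smul]
  rw [key0, key1, key2, zero_add, ← add_smul]

theorem fuzzy_torus_dmsa (n : ℕ) (hn : 0 < n)
    (Λ T : Matrix (Fin n) (Fin n) ℂ)
    (hΛ : Λ ∈ Matrix.unitaryGroup (Fin n) ℂ) (hT : T ∈ Matrix.unitaryGroup (Fin n) ℂ)
    (q : ℂ) (hq : ‖q‖ = 1) (hcomm : T * Λ = q • (Λ * T)) :
    (matComm (matComm Λ Λᴴ) Λ + matComm (matComm Λ T) Tᴴ + matComm (matComm Λ Tᴴ) T =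
        ((2 * ‖1 - q‖ ^ 2 : ℝ) : ℂ) • Λ ∧
      matComm (matComm T Tᴴ) T + matComm (matComm T Λ) Λᴴ + matComm (matComm T Λᴴ) Λ =
        ((2 * ‖1 - q‖ ^ 2 : ℝ) : ℂ) • T) ∧
    (∀ (θ θ' : ℝ) (q' : ℂ), q' ^ n = 1 →
      (Complex.exp (Complex.I * (θ : ℂ)) • clock n q') ∈ Matrix.unitaryGroup (Fin n) ℂ ∧
      (Complex.exp (Complex.I * (θ' : ℂ)) • shift n) ∈ Matrix.unitaryGroup (Fin n) ℂ ∧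
      (Complex.exp (Complex.I * (θ' : ℂ)) • shift n) *
          (Complex.exp (Complex.I * (θ : ℂ)) • clock n q') =
        q' • ((Complex.exp (Complex.I * (θ : ℂ)) • clock n q') *
          (Complex.exp (Complex.I * (θ' : ℂ)) • shift n))) := by
  have h1 : Λ * Λᴴ = 1 := by
    rw [← Matrix.star_eq_conjTranspose]; exact Matrix.mem_unitaryGroup_iff.mp hΛ
  have h2 : Λᴴ * Λ = 1 := by
    rw [← Matrix.star_eq_conjTranspose]; exact Matrix.mem_unitaryGroup_iff'.mp hΛ
  have h3 : T * Tᴴ = 1 := by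
    rw [← Matrix.star_eq_conjTranspose]; exact Matrix.mem_unitaryGroup_iff.mp hT
  have h4 : Tᴴ * T = 1 := by
    rw [← Matrix.star_eq_conjTranspose]; exact Matrix.mem_unitaryGroup_iff'.mp hT
  have hqc : q * (starRingEnd ℂ) q = 1 := by
    rw [Complex.mul_conj]
    norm_cast
    rw [Complex.normSq_eq_norm_sq, hq]; norm_num
  have hscal : ((2 * ‖1 - q‖ ^ 2 : ℝ) : ℂ) =
      (1 - q) * (1 - (starRingEnd ℂ) q) + (1 - (starRingEnd ℂ) q) * (1 - q) := by
    have habs : ((‖1 - q‖ : ℝ) : ℂ) ^ 2 = (1 - q) * (1 - (starRingEnd ℂ) q) := by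
      rw [show (1 : ℂ) - (starRingEnd ℂ) q = (starRingEnd ℂ) (1 - q) by rw [map_sub, map_one],
        Complex.mul_conj]
      norm_cast
      rw [Complex.normSq_eq_norm_sq]
    push_cast
    rw [habs]
    ring
  constructor
  · constructor
    · rw [hscal]
      exact dmsa_one Λ T h1 h2 h3 h4 q hqc hcomm
    · have hqc' : (starRingEnd ℂ) q * (starRingEnd ℂ) ((starRingEnd ℂ) q) = 1 := by
        rw [Complex.conj_conj, mul_comm]; exact hqc
      have hcomm' : Λ * T = (starRingEnd ℂ) q • (T * Λ) := by
        rw [hcomm, smul_smul, mul_comm ((starRingEnd ℂ) q) q, hqc, one_smul]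
      have := dmsa_one T Λ h3 h4 h1 h2 ((starRingEnd ℂ) q) hqc' hcomm'
      rw [this, Complex.conj_conj, hscal]
      ring_nf
  · intro θ θ' q' hq'
    refine ⟨smul_mem_unitary (clock_mem n hn q' hq') (exp_abs θ),
      smul_mem_unitary (shift_mem n hn) (exp_abs θ'), ?_⟩
    rw [smul_mul_assoc, mul_smul_comm, shift_mul_clock n q' hq', smul_mul_assoc,
      mul_smul_comm]
    simp only [smul_smul]
    congr 1
    ring
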